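/- For every integer J ≥ 1 there exist rational numbers 0 < θ_1 < θ_2 < ... < θ_J with θ_1 = 1, and continuous functions q_1,...,q_J : (0,1] → ℝ, such that, setting t_j := e^{−θ_j} and q_0 ≡ 0, for every j ∈ {1,...,J}: (i) q_j(x) ≥ 0 for all x ∈ (0,1]; (ii) q_j(x) = 0 for all x ∈ (0, t_j]; and (iii) q_j(x) + (1/x)·∫_x^1 [q_j(y) − q_{j−1}(y)] dy = 1 for all x ∈ [t_j, 1]. -/

import Mathlib

open MeasureTheory intervalIntegral

set_option maxHeartbeats 1600000

open Polynomial Set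

noncomputable section SecretaryDual

noncomputable def Fd : ℕ → ℝ → ℝ
  | 0 => fun _ => 1
  | (j+1) => fun u => ∫ v in (0:ℝ)..u, min 1 (Fd j v)

lemma Fd_cont : ∀ j, Continuous (Fd j) := by
  intro j
  induction j with
  | zero => exact continuous_const
  | succ j ih =>
    have hc : Continuous fun v => min 1 (Fd j v) := continuous_const.min ih
    have : ∀ u : ℝ, HasDerivAt (Fd (j+1)) (min 1 (Fd j u)) u := by
      intro u
      exact intervalIntegral.integral_hasDerivAt_right (hc.intervalIntegrable _ _)
        (hc.stronglyMeasurableAtFilter _ _) hc.continuousAt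
    exact continuous_iff_continuousAt.2 fun u => (this u).continuousAt

lemma Fd_hasDerivAt (j : ℕ) (u : ℝ) : HasDerivAt (Fd (j+1)) (min 1 (Fd j u)) u := by
  have hc : Continuous fun v => min 1 (Fd j v) := continuous_const.min (Fd_cont j)
  exact intervalIntegral.integral_hasDerivAt_right (hc.intervalIntegrable _ _)
    (hc.stronglyMeasurableAtFilter _ _) hc.continuousAt

lemma Fd_intable (j : ℕ) (a b : ℝ) :
    IntervalIntegrable (fun v => min 1 (Fd j v)) volume a b :=
  (continuous_const.min (Fd_cont j)).intervalIntegrable _ _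

lemma Fd_sub (j : ℕ) (a b : ℝ) :
    Fd (j+1) b - Fd (j+1) a = ∫ v in a..b, min 1 (Fd j v) := by
  simpa [Fd] using integral_interval_sub_left (Fd_intable j 0 b) (Fd_intable j 0 a)

lemma Fd_nonneg : ∀ j, ∀ u : ℝ, 0 ≤ u → 0 ≤ Fd j u := by
  intro j
  induction j with
  | zero => intro u _; norm_num [Fd]
  | succ j ih =>
    intro u hu
    have : (0:ℝ) ≤ ∫ v in (0:ℝ)..u, min 1 (Fd j v) := by
      apply intervalIntegral.integral_nonneg hu
      intro v hv
      exact le_min zero_le_one (ih v hv.1)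
    simpa [Fd] using this

lemma Fd_monotoneOn (j : ℕ) : MonotoneOn (Fd (j+1)) (Ici 0) := by
  intro a ha b hb hab
  have h := Fd_sub j a b
  have : (0:ℝ) ≤ ∫ v in a..b, min 1 (Fd j v) := by
    apply intervalIntegral.integral_nonneg hab
    intro v hv
    exact le_min zero_le_one (Fd_nonneg j v (le_trans ha hv.1))
  linarith




-- F_{j+1} ≤ F_j pointwise on min-level: min 1 (F (j+1) u) ≤ min 1 (F j u) for u ≥ 0
lemma Fd_chain : ∀ j, ∀ u : ℝ, 0 ≤ u → Fd (j+2) u ≤ Fd (j+1) u := by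
  intro j
  induction j with
  | zero =>
    intro u hu
    have h1 : Fd 1 u = u := by
      simp [Fd]
    have h2 : Fd 2 u ≤ u := by
      have : Fd 2 u - Fd 2 0 = ∫ v in (0:ℝ)..u, min 1 (Fd 1 v) := Fd_sub 1 0 u
      have h0 : Fd 2 0 = 0 := by simp [Fd]
      have hle : (∫ v in (0:ℝ)..u, min 1 (Fd 1 v)) ≤ ∫ v in (0:ℝ)..u, (1:ℝ) := by
        apply intervalIntegral.integral_mono_on hu (Fd_intable 1 0 u)
          (intervalIntegrable_const)
        intro v _; exact min_le_left _ _
      simp at hle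
      linarith
    linarith [h1 ▸ h2]
  | succ j ih =>
    intro u hu
    have : Fd (j+3) u - Fd (j+3) 0 = ∫ v in (0:ℝ)..u, min 1 (Fd (j+2) v) := Fd_sub (j+2) 0 u
    have h2 : Fd (j+2) u - Fd (j+2) 0 = ∫ v in (0:ℝ)..u, min 1 (Fd (j+1) v) := Fd_sub (j+1) 0 u
    have h0 : ∀ k, Fd (k+1) 0 = 0 := by intro k; simp [Fd]
    have hle : (∫ v in (0:ℝ)..u, min 1 (Fd (j+2) v)) ≤ ∫ v in (0:ℝ)..u, min 1 (Fd (j+1) v) := by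
      apply intervalIntegral.integral_mono_on hu (Fd_intable (j+2) 0 u) (Fd_intable (j+1) 0 u)
      intro v hv
      exact min_le_min le_rfl (ih v hv.1)
    rw [h0] at this h2
    linarith

-- F_j u ≤ u for j ≥ 1, u ≥ 0
lemma Fd_le_id (j : ℕ) (u : ℝ) (hu : 0 ≤ u) : Fd (j+1) u ≤ u := by
  induction j with
  | zero => simp [Fd]
  | succ j ih => exact le_trans (Fd_chain j u hu) ih

-- strict chain on (0,1)
lemma Fd_strict : ∀ j, ∀ u ∈ Ioo (0:ℝ) 1, min 1 (Fd (j+1) u) < min 1 (Fd j u) := by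
  intro j
  induction j with
  | zero =>
    intro u hu
    have h1 : Fd 1 u = u := by simp [Fd]
    rw [h1]
    have h0 : Fd 0 u = 1 := rfl
    rw [h0, min_eq_right hu.2.le, min_self]
    exact hu.2
  | succ j ih =>
    intro u hu
    have hpos : (0:ℝ) < ∫ v in (0:ℝ)..u, (min 1 (Fd j v) - min 1 (Fd (j+1) v)) := by
      apply intervalIntegral.intervalIntegral_pos_of_pos_on
        ((Fd_intable j 0 u).sub (Fd_intable (j+1) 0 u))
      · intro v hv
        have := ih v ⟨hv.1, lt_trans hv.2 hu.2⟩
        linarith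
      · exact hu.1
    have hint : (∫ v in (0:ℝ)..u, (min 1 (Fd j v) - min 1 (Fd (j+1) v)))
        = (∫ v in (0:ℝ)..u, min 1 (Fd j v)) - ∫ v in (0:ℝ)..u, min 1 (Fd (j+1) v) :=
      intervalIntegral.integral_sub (Fd_intable j 0 u) (Fd_intable (j+1) 0 u)
    have hs : Fd (j+2) u - Fd (j+2) 0 = ∫ v in (0:ℝ)..u, min 1 (Fd (j+1) v) := Fd_sub (j+1) 0 u
    have hs2 : Fd (j+1) u - Fd (j+1) 0 = ∫ v in (0:ℝ)..u, min 1 (Fd j v) := Fd_sub j 0 u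
    have h0 : ∀ k, Fd (k+1) 0 = 0 := by intro k; simp [Fd]
    rw [h0] at hs hs2
    have hlt : Fd (j+2) u < Fd (j+1) u := by rw [hint] at hpos; linarith
    have hle1 : Fd (j+1) u < 1 := lt_of_le_of_lt (Fd_le_id j u hu.1.le) hu.2
    rw [min_eq_right hle1.le, min_eq_right (le_of_lt (lt_trans hlt hle1))]
    exact hlt




lemma Fd_min_chain (j : ℕ) (v : ℝ) (hv : 0 ≤ v) :
    min 1 (Fd (j+1) v) ≤ min 1 (Fd j v) := by
  cases j with
  | zero => simp [Fd]
  | succ k => exact min_le_min le_rfl (Fd_chain k v hv)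

lemma Fd_strict_ge_one (j : ℕ) (w : ℝ) (hw : 1 ≤ w) : Fd (j+2) w < Fd (j+1) w := by
  have h1 : (∫ v in (0:ℝ)..1, (min 1 (Fd j v) - min 1 (Fd (j+1) v))) > 0 := by
    apply intervalIntegral.intervalIntegral_pos_of_pos_on
      ((Fd_intable j 0 1).sub (Fd_intable (j+1) 0 1))
    · intro v hv
      have := Fd_strict j v hv
      linarith
    · norm_num
  have h2 : (0:ℝ) ≤ ∫ v in (1:ℝ)..w, (min 1 (Fd j v) - min 1 (Fd (j+1) v)) := by
    apply intervalIntegral.integral_nonneg hw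
    intro v hv
    have := Fd_min_chain j v (le_trans zero_le_one hv.1)
    linarith
  have hadd : (∫ v in (0:ℝ)..1, (min 1 (Fd j v) - min 1 (Fd (j+1) v)))
      + (∫ v in (1:ℝ)..w, (min 1 (Fd j v) - min 1 (Fd (j+1) v)))
      = ∫ v in (0:ℝ)..w, (min 1 (Fd j v) - min 1 (Fd (j+1) v)) :=
    intervalIntegral.integral_add_adjacent_intervals
      ((Fd_intable j 0 1).sub (Fd_intable (j+1) 0 1))
      ((Fd_intable j 1 w).sub (Fd_intable (j+1) 1 w))
  have hint : (∫ v in (0:ℝ)..w, (min 1 (Fd j v) - min 1 (Fd (j+1) v)))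
      = (∫ v in (0:ℝ)..w, min 1 (Fd j v)) - ∫ v in (0:ℝ)..w, min 1 (Fd (j+1) v) :=
    intervalIntegral.integral_sub (Fd_intable j 0 w) (Fd_intable (j+1) 0 w)
  have hs : Fd (j+2) w - Fd (j+2) 0 = ∫ v in (0:ℝ)..w, min 1 (Fd (j+1) v) := Fd_sub (j+1) 0 w
  have hs2 : Fd (j+1) w - Fd (j+1) 0 = ∫ v in (0:ℝ)..w, min 1 (Fd j v) := Fd_sub j 0 w
  have h0 : ∀ k, Fd (k+1) 0 = 0 := by intro k; simp [Fd]
  rw [h0] at hs hs2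
  linarith


noncomputable def antider (p : ℚ[X]) : ℚ[X] :=
  p.sum fun n a => C (a / (n+1)) * X ^ (n+1)

lemma antider_deriv (p : ℚ[X]) : derivative (antider p) = p := by
  unfold antider
  rw [Polynomial.sum, map_sum]
  have : ∀ n ∈ p.support, derivative (C (p.coeff n / (n+1)) * X ^ (n+1))
      = C (p.coeff n) * X ^ n := by
    intro n _
    rw [Polynomial.derivative_C_mul_X_pow]
    have h1 : ((n:ℚ)+1) ≠ 0 := by positivity
    have h2 : p.coeff n / ((n:ℚ)+1) * ((n+1 : ℕ) : ℚ) = p.coeff n := by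
      push_cast
      field_simp
    rw [h2, Nat.add_sub_cancel]
  rw [Finset.sum_congr rfl this]
  exact Polynomial.sum_C_mul_X_pow_eq p

noncomputable def paev (p : ℚ[X]) (x : ℝ) : ℝ := Polynomial.aeval x p

lemma paev_rat (p : ℚ[X]) (q : ℚ) : paev p (q:ℝ) = ((p.eval q : ℚ) : ℝ) := by
  unfold paev
  have : ((q:ℚ):ℝ) = algebraMap ℚ ℝ q := rfl
  rw [this, Polynomial.aeval_algebraMap_apply]
  simp

lemma paev_eq_eval_map (p : ℚ[X]) (x : ℝ) :
    paev p x = (p.map (algebraMap ℚ ℝ)).eval x := by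
  unfold paev
  rw [Polynomial.aeval_def, Polynomial.eval_map]

lemma paev_hasDerivAt (p : ℚ[X]) (x : ℝ) :
    HasDerivAt (paev (antider p)) (paev p x) x := by
  have h := Polynomial.hasDerivAt ((antider p).map (algebraMap ℚ ℝ)) x
  rw [Polynomial.derivative_map, antider_deriv] at h
  have e : paev (antider p) = fun x => (Polynomial.aeval x) (antider p) := rfl
  rw [e]
  simpa [paev_eq_eval_map] using h

lemma paev_cont (p : ℚ[X]) : Continuous (paev p) := by
  have : paev p = fun x => (p.map (algebraMap ℚ ℝ)).eval x := funext (paev_eq_eval_map p)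
  rw [this]
  exact Polynomial.continuous_eval₂ _ _

lemma paev_integral (p : ℚ[X]) (a b : ℝ) :
    (∫ u in a..b, paev p u) = paev (antider p) b - paev (antider p) a :=
  intervalIntegral.integral_eq_sub_of_hasDerivAt
    (fun x _ => paev_hasDerivAt p x) ((paev_cont p).intervalIntegrable a b)




noncomputable def stepVal (θ : ℕ → ℚ) (P : ℕ → ℚ[X]) : ℕ → ℚ
  | 0 => 0
  | (i+1) => stepVal θ P i + (antider (P i)).eval (θ (i+1)) - (antider (P i)).eval (θ i)

noncomputable def gD : ℕ → (ℕ → ℚ) × (ℕ → ℚ[X])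
  | 0 => (fun _ => 0, fun _ => 1)
  | (j+1) =>
    (fun k => if k = j+1 then (gD j).1 j + 1 - stepVal (gD j).1 (gD j).2 j else (gD j).1 k,
     fun i => if i ≤ j then
        C (stepVal (gD j).1 (gD j).2 i - (antider ((gD j).2 i)).eval ((gD j).1 i))
          + antider ((gD j).2 i)
      else 1)

noncomputable def θq (k : ℕ) : ℚ := (gD k).1 k
noncomputable def θR (k : ℕ) : ℝ := ((θq k : ℚ) : ℝ)
noncomputable def Pj (j : ℕ) : ℕ → ℚ[X] := (gD j).2
noncomputable def vq (j i : ℕ) : ℚ := stepVal θq (Pj j) i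

lemma θq_zero : θq 0 = 0 := rfl

lemma gD_fst_stable : ∀ j k, k ≤ j → (gD j).1 k = θq k := by
  intro j
  induction j with
  | zero => intro k hk; interval_cases k; rfl
  | succ j ih =>
    intro k hk
    rcases Nat.eq_or_lt_of_le hk with h | h
    · rw [h]; rfl
    · have hk' : k ≤ j := Nat.lt_succ_iff.mp h
      have : (gD (j+1)).1 k = (gD j).1 k := by
        simp only [gD]
        rw [if_neg (by omega)]
      rw [this, ih k hk']

lemma stepVal_congr (θ θ' : ℕ → ℚ) (P : ℕ → ℚ[X]) :
    ∀ i, (∀ k ≤ i, θ k = θ' k) → stepVal θ P i = stepVal θ' P i := by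
  intro i
  induction i with
  | zero => intro _; rfl
  | succ i ih =>
    intro h
    simp only [stepVal]
    rw [ih (fun k hk => h k (Nat.le_succ_of_le hk)), h (i+1) le_rfl, h i (Nat.le_succ_of_le le_rfl)]

lemma stepVal_eq_vq (j i : ℕ) (hij : i ≤ j) :
    stepVal (gD j).1 (gD j).2 i = vq j i := by
  unfold vq Pj
  exact stepVal_congr _ _ _ i (fun k hk => gD_fst_stable j k (le_trans hk hij))

lemma θq_succ (j : ℕ) : θq (j+1) = θq j + 1 - vq j j := by
  show (gD (j+1)).1 (j+1) = _
  simp only [gD, if_pos rfl, if_true, eq_self_iff_true]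
  rw [gD_fst_stable j j le_rfl, stepVal_eq_vq j j le_rfl]

lemma θq_one : θq 1 = 1 := by
  rw [θq_succ 0]
  have h1 : vq 0 0 = 0 := rfl
  rw [h1, θq_zero]
  norm_num

lemma Pj_succ_le (j i : ℕ) (hij : i ≤ j) :
    Pj (j+1) i = C (vq j i - (antider (Pj j i)).eval (θq i)) + antider (Pj j i) := by
  show (gD (j+1)).2 i = _
  simp only [gD, if_pos hij]
  rw [gD_fst_stable j i hij, stepVal_eq_vq j i hij]
  rfl

lemma Pj_succ_gt (j i : ℕ) (hij : j < i) : Pj (j+1) i = 1 := by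
  show (gD (j+1)).2 i = _
  simp only [gD, if_neg (by omega : ¬ i ≤ j)]

lemma vq_zero (j : ℕ) : vq j 0 = 0 := rfl

lemma vq_succ (j i : ℕ) :
    vq j (i+1) = vq j i + (antider (Pj j i)).eval (θq (i+1)) - (antider (Pj j i)).eval (θq i) := rfl

lemma paev_one (u : ℝ) : paev 1 u = 1 := by simp [paev]

lemma paev_C_add (r : ℚ) (p : ℚ[X]) (u : ℝ) :
    paev (C r + p) u = (r : ℝ) + paev p u := by
  simp only [paev, map_add, Polynomial.aeval_C]
  rw [eq_ratCast (algebraMap ℚ ℝ) r]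

lemma θR_zero : θR 0 = 0 := by simp [θR, θq_zero]

lemma Fd_succ_zero (j : ℕ) : Fd (j+1) 0 = 0 := by simp [Fd]

lemma invAll : ∀ j, (∀ i < j, θq i < θq (i+1)) ∧ (Fd j (θR j) = 1) ∧
    (∀ i ≤ j, ∀ u ∈ Icc (θR i) (θR (i+1)), min 1 (Fd j u) = paev (Pj j i) u) := by
  intro j
  induction j with
  | zero =>
    refine ⟨by omega, by simp [Fd], ?_⟩
    intro i hi u _
    interval_cases i
    have h1 : Fd 0 u = 1 := rfl
    have h2 : Pj 0 0 = 1 := rfl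
    rw [h1, h2, paev_one, min_self]
  | succ j IH =>
    obtain ⟨A, B, C⟩ := IH
    -- monotonicity of θq up to j
    have key : ∀ b, b ≤ j → ∀ a, a ≤ b → θq a ≤ θq b := by
      intro b
      induction b with
      | zero => intro _ a ha; interval_cases a; exact le_rfl
      | succ b ihb =>
        intro hb a ha
        rcases Nat.eq_or_lt_of_le ha with h | h
        · rw [h]
        · exact le_trans (ihb (by omega) a (by omega)) (le_of_lt (A b (by omega)))
    have hθ0 : ∀ i, i ≤ j → (0:ℝ) ≤ θR i := by
      intro i hi
      have := key i hi 0 (Nat.zero_le i)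
      rw [θq_zero] at this
      unfold θR; exact_mod_cast this
    -- FTC on pieces
    have piece : ∀ i, i ≤ j → ∀ x y : ℝ, θR i ≤ x → x ≤ y → y ≤ θR (i+1) →
        (∫ v in x..y, min 1 (Fd j v)) = paev (antider (Pj j i)) y - paev (antider (Pj j i)) x := by
      intro i hi x y hx hxy hy
      have heq : EqOn (fun v => min 1 (Fd j v)) (paev (Pj j i)) (uIcc x y) := by
        intro v hv
        rw [uIcc_of_le hxy] at hv
        exact C i hi v ⟨le_trans hx hv.1, le_trans hv.2 hy⟩
      rw [intervalIntegral.integral_congr heq, paev_integral]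
    -- value correctness
    have vcorrect : ∀ i, i ≤ j → Fd (j+1) (θR i) = ((vq j i : ℚ) : ℝ) := by
      intro i
      induction i with
      | zero => intro _; rw [θR_zero, Fd_succ_zero, vq_zero]; norm_num
      | succ i ihi =>
        intro hi
        have hij : i ≤ j := by omega
        have hlt : θR i ≤ θR (i+1) := by
          have := A i (by omega)
          unfold θR; exact_mod_cast this.le
        have hsub : Fd (j+1) (θR (i+1)) - Fd (j+1) (θR i)
            = ∫ v in (θR i)..(θR (i+1)), min 1 (Fd j v) := Fd_sub j _ _
        rw [piece i hij _ _ le_rfl hlt le_rfl] at hsub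
        rw [ihi hij] at hsub
        unfold θR at *
        rw [paev_rat, paev_rat] at hsub
        rw [vq_succ]
        push_cast at hsub ⊢
        linarith
    -- vq j j < 1
    have hvlt : ((vq j j : ℚ) : ℝ) < 1 := by
      rw [← vcorrect j le_rfl]
      cases j with
      | zero => rw [θR_zero, Fd_succ_zero]; norm_num
      | succ m =>
        have h1le : (1:ℝ) ≤ θR (m+1) := by
          have := key (m+1) le_rfl 1 (by omega)
          rw [θq_one] at this
          unfold θR; exact_mod_cast this
        calc Fd (m+2) (θR (m+1)) < Fd (m+1) (θR (m+1)) := Fd_strict_ge_one m _ h1le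
        _ = 1 := B
    have hvltq : vq j j < 1 := by exact_mod_cast hvlt
    have A' : ∀ i < j+1, θq i < θq (i+1) := by
      intro i hi
      rcases Nat.lt_succ_iff_lt_or_eq.mp hi with h | h
      · exact A i h
      · rw [h, θq_succ]; linarith
    have hθsucc : θR j < θR (j+1) := by
      have := A' j (by omega)
      unfold θR; exact_mod_cast this
    have key' : ∀ b, b ≤ j+1 → ∀ a, a ≤ b → θq a ≤ θq b := by
      intro b
      induction b with
      | zero => intro _ a ha; interval_cases a; exact le_rfl
      | succ b ihb =>
        intro hb a ha
        rcases Nat.eq_or_lt_of_le ha with h | h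
        · rw [h]
        · exact le_trans (ihb (by omega) a (by omega)) (le_of_lt (A' b (by omega)))
    have hθ0' : ∀ i, i ≤ j+1 → (0:ℝ) ≤ θR i := by
      intro i hi
      have := key' i hi 0 (Nat.zero_le i)
      rw [θq_zero] at this
      unfold θR; exact_mod_cast this
    -- Fd j ≥ 1 on [θR j, ∞)
    have hFdj_ge : ∀ v : ℝ, θR j ≤ v → 1 ≤ Fd j v := by
      intro v hv
      cases j with
      | zero => exact le_of_eq rfl
      | succ m =>
        have h0 : (0:ℝ) ≤ θR (m+1) := hθ0 (m+1) le_rfl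
        calc (1:ℝ) = Fd (m+1) (θR (m+1)) := B.symm
        _ ≤ Fd (m+1) v := Fd_monotoneOn m h0 (le_trans h0 hv) hv
    have B' : Fd (j+1) (θR (j+1)) = 1 := by
      have hsub : Fd (j+1) (θR (j+1)) - Fd (j+1) (θR j)
          = ∫ v in (θR j)..(θR (j+1)), min 1 (Fd j v) := Fd_sub j _ _
      have heq : EqOn (fun v => min 1 (Fd j v)) (fun _ => (1:ℝ)) (uIcc (θR j) (θR (j+1))) := by
        intro v hv
        rw [uIcc_of_le hθsucc.le] at hv
        exact min_eq_left (hFdj_ge v hv.1)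
      rw [intervalIntegral.integral_congr heq] at hsub
      simp only [intervalIntegral.integral_const, smul_eq_mul, mul_one] at hsub
      have hv : Fd (j+1) (θR j) = ((vq j j : ℚ) : ℝ) := vcorrect j le_rfl
      have hθs : θR (j+1) = θR j + 1 - ((vq j j : ℚ) : ℝ) := by
        unfold θR
        rw [θq_succ]
        push_cast
        ring
      rw [hv, hθs] at hsub
      rw [hθs]
      linarith
    refine ⟨A', B', ?_⟩
    intro i hi u hu
    rcases Nat.lt_succ_iff_lt_or_eq.mp (Nat.lt_succ_of_le hi) with h | h
    · -- i ≤ j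
      have hij : i ≤ j := by omega
      have hu2 : u ≤ θR (j+1) := by
        have : θq (i+1) ≤ θq (j+1) := key' (j+1) le_rfl (i+1) (by omega)
        have h2 : θR (i+1) ≤ θR (j+1) := by unfold θR; exact_mod_cast this
        exact le_trans hu.2 h2
      have hu0 : (0:ℝ) ≤ u := le_trans (hθ0' i (by omega)) hu.1
      have hle1 : Fd (j+1) u ≤ 1 := by
        calc Fd (j+1) u ≤ Fd (j+1) (θR (j+1)) :=
          Fd_monotoneOn j hu0 (hθ0' (j+1) le_rfl) hu2
        _ = 1 := B'
      rw [min_eq_right hle1]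
      have hsub : Fd (j+1) u - Fd (j+1) (θR i)
          = ∫ v in (θR i)..u, min 1 (Fd j v) := Fd_sub j _ _
      rw [piece i hij _ _ le_rfl hu.1 hu.2] at hsub
      have hv : Fd (j+1) (θR i) = ((vq j i : ℚ) : ℝ) := vcorrect i hij
      rw [Pj_succ_le j i hij, paev_C_add]
      have hrat : paev (antider (Pj j i)) (θR i) = (((antider (Pj j i)).eval (θq i) : ℚ) : ℝ) := by
        unfold θR; exact paev_rat _ _
      rw [hrat] at hsub
      push_cast
      linarith
    · -- i = j+1
      rw [h] at hu ⊢
      have hge : 1 ≤ Fd (j+1) u := by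
        calc (1:ℝ) = Fd (j+1) (θR (j+1)) := B'.symm
        _ ≤ Fd (j+1) u := Fd_monotoneOn j (hθ0' (j+1) le_rfl)
            (le_trans (hθ0' (j+1) le_rfl) hu.1) hu.1
      rw [min_eq_left hge, Pj_succ_gt j (j+1) (by omega), paev_one]

lemma θq_lt (k : ℕ) : θq k < θq (k+1) := (invAll (k+1)).1 k (Nat.lt_succ_self k)

lemma Fd_at_θ (j : ℕ) : Fd j (θR j) = 1 := (invAll j).2.1




lemma θq_mono : Monotone θq := monotone_nat_of_le_succ (fun n => (θq_lt n).le)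

lemma θq_pos (k : ℕ) (hk : 1 ≤ k) : 0 < θq k :=
  lt_of_lt_of_le (by rw [θq_one]; norm_num : (0:ℚ) < θq 1) (θq_mono hk)

lemma θR_nonneg (k : ℕ) : 0 ≤ θR k := by
  have := θq_mono (Nat.zero_le k)
  rw [θq_zero] at this
  unfold θR; exact_mod_cast this

lemma θR_ge_one (k : ℕ) (hk : 1 ≤ k) : 1 ≤ θR k := by
  have := θq_mono hk
  rw [θq_one] at this
  unfold θR; exact_mod_cast this

noncomputable def qf : ℕ → ℝ → ℝ
  | 0 => fun _ => 0
  | (m+1) => fun x => max 0 (1 - Fd (m+1) (-Real.log x))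

lemma qf_zero (x : ℝ) : qf 0 x = 0 := rfl

lemma qf_nonneg (j : ℕ) (x : ℝ) : 0 ≤ qf j x := by
  cases j with
  | zero => exact le_rfl
  | succ m => exact le_max_left _ _

lemma one_sub_qf (j : ℕ) (x : ℝ) : 1 - qf j x = min 1 (Fd j (-Real.log x)) := by
  cases j with
  | zero =>
    have : Fd 0 (-Real.log x) = 1 := rfl
    rw [qf_zero, this, min_self, sub_zero]
  | succ m =>
    show 1 - max 0 (1 - Fd (m+1) (-Real.log x)) = _
    rcases le_total 1 (Fd (m+1) (-Real.log x)) with h | h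
    · rw [max_eq_left (by linarith), min_eq_left h]; ring
    · rw [max_eq_right (by linarith), min_eq_right h]; ring

lemma qf_contOn (j : ℕ) : ContinuousOn (qf j) (Ioi 0) := by
  cases j with
  | zero => exact continuousOn_const
  | succ m =>
    have hsub : (Ioi (0:ℝ)) ⊆ {(0:ℝ)}ᶜ := fun x hx => by
      simp only [mem_compl_iff, mem_singleton_iff]
      exact ne_of_gt hx
    have h1 : ContinuousOn (fun x : ℝ => -Real.log x) (Ioi 0) :=
      (Real.continuousOn_log.mono hsub).neg
    have h2 : ContinuousOn (fun x : ℝ => Fd (m+1) (-Real.log x)) (Ioi 0) :=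
      (Fd_cont (m+1)).comp_continuousOn h1
    exact (continuous_const.max continuous_id).comp_continuousOn (continuousOn_const.sub h2)

lemma qf_eq_zero (m : ℕ) (x : ℝ) (hx : x ∈ Ioc 0 (Real.exp (-θR (m+1)))) :
    qf (m+1) x = 0 := by
  have hlog : Real.log x ≤ -θR (m+1) := (Real.log_le_iff_le_exp hx.1).mpr hx.2
  have hge : 1 ≤ Fd (m+1) (-Real.log x) := by
    calc (1:ℝ) = Fd (m+1) (θR (m+1)) := (Fd_at_θ (m+1)).symm
    _ ≤ Fd (m+1) (-Real.log x) := Fd_monotoneOn m (θR_nonneg _)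
        (le_trans (θR_nonneg _) (by linarith)) (by linarith)
  show max 0 (1 - Fd (m+1) (-Real.log x)) = 0
  exact max_eq_left (by linarith)

lemma qf_eq_G (m : ℕ) (x : ℝ) (hx : x ∈ Icc (Real.exp (-θR (m+1))) 1) (hx0 : 0 < x) :
    qf (m+1) x = 1 - Fd (m+1) (-Real.log x) := by
  have hlog1 : -θR (m+1) ≤ Real.log x := (Real.le_log_iff_exp_le hx0).mpr hx.1
  have hlog2 : Real.log x ≤ 0 := Real.log_nonpos hx0.le hx.2
  have hle : Fd (m+1) (-Real.log x) ≤ 1 := by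
    calc Fd (m+1) (-Real.log x) ≤ Fd (m+1) (θR (m+1)) :=
      Fd_monotoneOn m (mem_Ici.mpr (by linarith)) (mem_Ici.mpr (θR_nonneg _)) (by linarith)
    _ = 1 := Fd_at_θ (m+1)
  show max 0 (1 - Fd (m+1) (-Real.log x)) = _
  exact max_eq_right (by linarith)

lemma qf_one (m : ℕ) : qf (m+1) 1 = 1 := by
  show max 0 (1 - Fd (m+1) (-Real.log 1)) = 1
  rw [Real.log_one, neg_zero, Fd_succ_zero]
  norm_num

-- the main integral equation
lemma qf_equation (m : ℕ) (x : ℝ)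
    (hx : x ∈ Icc (Real.exp (-θR (m+1))) 1) :
    qf (m+1) x + (1 / x) * (∫ y in x..(1:ℝ), (qf (m+1) y - qf m y)) = 1 := by
  set j := m + 1 with hj
  set t := Real.exp (-θR j) with htdef
  have ht0 : 0 < t := Real.exp_pos _
  have ht1 : t < 1 := by
    rw [htdef]
    have := θR_ge_one j (by omega)
    exact Real.exp_lt_one_iff.mpr (by linarith)
  set f : ℝ → ℝ := fun y => qf j y - qf m y with hf
  have hfcont : ContinuousOn f (Ioi 0) := (qf_contOn j).sub (qf_contOn m)
  set H : ℝ → ℝ := fun x => x * (1 - qf j x) - ∫ y in x..(1:ℝ), f y with hH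
  have hderiv : ∀ z ∈ Icc t 1, HasDerivWithinAt H 0 (Icc t 1) z := by
    intro z hz
    have hz0 : 0 < z := lt_of_lt_of_le ht0 hz.1
    have hlog : HasDerivAt (fun x : ℝ => -Real.log x) (-z⁻¹) z :=
      (Real.hasDerivAt_log hz0.ne').neg
    have hF : HasDerivAt (Fd j) (min 1 (Fd m (-Real.log z))) (-Real.log z) :=
      Fd_hasDerivAt m _
    have hcomp : HasDerivAt (fun x : ℝ => Fd j (-Real.log x))
        (min 1 (Fd m (-Real.log z)) * -z⁻¹) z := by have := hF.comp z hlog; exact this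
    have hG : HasDerivAt (fun x : ℝ => 1 - Fd j (-Real.log x))
        (min 1 (Fd m (-Real.log z)) * z⁻¹) z := by
      have := hcomp.const_sub 1
      convert this using 1
      · rfl
      · rfl
      ring
    have hq : HasDerivWithinAt (qf j) (min 1 (Fd m (-Real.log z)) * z⁻¹) (Icc t 1) z := by
      apply hG.hasDerivWithinAt.congr
      · intro y hy
        exact qf_eq_G m y hy (lt_of_lt_of_le ht0 hy.1)
      · exact qf_eq_G m z hz hz0
    have hA : HasDerivWithinAt (fun x : ℝ => x * (1 - qf j x))
        (1 * (1 - qf j z) + z * (0 - min 1 (Fd m (-Real.log z)) * z⁻¹)) (Icc t 1) z :=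
      (hasDerivWithinAt_id z _).mul ((hasDerivWithinAt_const z _ 1).sub hq)
    have hInt : HasDerivAt (fun a : ℝ => ∫ y in a..(1:ℝ), f y) (-f z) z := by
      apply intervalIntegral.integral_hasDerivAt_left
      · apply ContinuousOn.intervalIntegrable
        apply hfcont.mono
        rw [uIcc_of_le hz.2]
        intro y hy
        exact lt_of_lt_of_le hz0 hy.1
      · exact ContinuousOn.stronglyMeasurableAtFilter isOpen_Ioi hfcont z hz0
      · exact hfcont.continuousAt (Ioi_mem_nhds hz0)
    have hHd : HasDerivWithinAt H
        ((1 * (1 - qf j z) + z * (0 - min 1 (Fd m (-Real.log z)) * z⁻¹)) - (-f z))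
        (Icc t 1) z := hA.sub hInt.hasDerivWithinAt
    convert hHd using 1
    have hmin : min 1 (Fd m (-Real.log z)) = 1 - qf m z := (one_sub_qf m z).symm
    rw [hmin, hf]
    field_simp
    ring
  have hdiff : DifferentiableOn ℝ H (Icc t 1) :=
    fun z hz => (hderiv z hz).differentiableWithinAt
  have hd0 : ∀ z ∈ Ico t 1, derivWithin H (Icc t 1) z = 0 := by
    intro z hz
    exact (hderiv z ⟨hz.1, hz.2.le⟩).derivWithin ((uniqueDiffOn_Icc ht1) z ⟨hz.1, hz.2.le⟩)
  have hconst := constant_of_derivWithin_zero hdiff hd0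
  have hH1 : H 1 = 0 := by
    rw [hH]
    simp [hj, qf_one m]
  have hHt : H t = 0 := by
    have := hconst 1 ⟨ht1.le, le_rfl⟩
    rw [hH1] at this
    exact this.symm
  have hHx : H x = 0 := by
    rw [hconst x hx, hHt]
  have hx0 : 0 < x := lt_of_lt_of_le ht0 hx.1
  have hHx2 : x * (1 - qf j x) - (∫ y in x..(1:ℝ), f y) = 0 := hHx
  have : (∫ y in x..(1:ℝ), f y) = x * (1 - qf j x) := by linarith
  rw [hf] at this
  rw [this]
  have hxne : x ≠ 0 := hx0.ne'
  have h2 : (1/x) * (x * (1 - qf j x)) = 1 - qf j x := by field_simp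
  rw [h2]
  ring

end SecretaryDual

/-- Existence of a feasible dual solution of `CD(J)` satisfying the complementary
slackness system: for every `J ≥ 1` there are rationals `0 < θ_1 < ⋯ < θ_J` with
`θ_1 = 1` and continuous functions `q_1, …, q_J` on `(0,1]` such that, with
`t_j = e^(-θ_j)` and `q_0 ≡ 0`, each `q_j` is non-negative, vanishes on `(0,t_j]`,
and satisfies `q_j x + (1/x) ∫_x^1 (q_j - q_(j-1)) = 1` on `[t_j, 1]`. -/
theorem exists_dual_thresholds (J : ℕ) (hJ : 1 ≤ J) :
    ∃ (θ : ℕ → ℚ) (q : ℕ → ℝ → ℝ),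
      θ 1 = 1 ∧
      (∀ j ∈ Finset.Icc 1 J, 0 < θ j) ∧
      (∀ j : ℕ, 1 ≤ j → j < J → θ j < θ (j + 1)) ∧
      (∀ x : ℝ, q 0 x = 0) ∧
      (∀ j ∈ Finset.Icc 1 J,
        ContinuousOn (q j) (Set.Ioc 0 1) ∧
        (∀ x ∈ Set.Ioc (0 : ℝ) 1, 0 ≤ q j x) ∧
        (∀ x ∈ Set.Ioc (0 : ℝ) (Real.exp (-(θ j : ℝ))), q j x = 0) ∧
        (∀ x ∈ Set.Icc (Real.exp (-(θ j : ℝ))) 1,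
          q j x + (1 / x) * (∫ y in x..(1 : ℝ), (q j y - q (j - 1) y)) = 1)) := by
  
  refine ⟨θq, qf, θq_one, ?_, ?_, fun x => rfl, ?_⟩
  · intro j hj
    exact θq_pos j (Finset.mem_Icc.mp hj).1
  · intro j _ _
    exact θq_lt j
  · intro j hj
    have h1j : 1 ≤ j := (Finset.mem_Icc.mp hj).1
    obtain ⟨m, rfl⟩ : ∃ m, j = m + 1 := ⟨j - 1, by omega⟩
    have hθ : (-(θq (m+1) : ℝ)) = -θR (m+1) := rfl
    refine ⟨(qf_contOn (m+1)).mono (fun x hx => hx.1), fun x _ => qf_nonneg _ x, ?_, ?_⟩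
    · intro x hx
      rw [hθ] at hx
      exact qf_eq_zero m x hx
    · intro x hx
      rw [hθ] at hx
      exact qf_equation m x hx
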